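/- Let f(z) = Σ_{j=1}^{n+1} c_j·(z_j + z)/(z_j − z) with z_j distinct on the unit circle in cyclic order, c_j real and nonzero, Σ c_j = 1. If c_j and c_{j+1} have the same sign then f has an odd number of zeros (with multiplicity) on the open arc of the unit circle between z_j and z_{j+1}; if they have opposite signs, an even number. -/

import Mathlib

open Polynomial Finset

section QCZPhelp
open Complex

lemma QCZP_two_cos (z : ℂ) : 2 * Complex.cos z = Complex.exp (z*I) + Complex.exp (-z*I) := by
  rw [Complex.cos]; ring

lemma QCZP_two_I_sin (z : ℂ) : 2 * I * Complex.sin z = Complex.exp (z*I) - Complex.exp (-z*I) := by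
  rw [Complex.sin]
  linear_combination (Complex.exp (-z*I) - Complex.exp (z*I)) * Complex.I_sq

lemma QCZP_exp_add_exp (a b : ℝ) :
    Complex.exp (a*I) + Complex.exp (b*I)
      = Complex.exp ((((a+b)/2 : ℝ) : ℂ) * I) * (2 * ((Real.cos ((a-b)/2) : ℝ) : ℂ)) := by
  have e1 : Complex.exp ((((a+b)/2 : ℝ) : ℂ) * I) * Complex.exp ((((a-b)/2 : ℝ) : ℂ) * I)
      = Complex.exp ((a:ℂ)*I) := by rw [← Complex.exp_add]; congr 1; push_cast; ring
  have e2 : Complex.exp ((((a+b)/2 : ℝ) : ℂ) * I) * Complex.exp (-((((a-b)/2 : ℝ)) : ℂ) * I)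
      = Complex.exp ((b:ℂ)*I) := by rw [← Complex.exp_add]; congr 1; push_cast; ring
  rw [Complex.ofReal_cos]
  linear_combination (-e1) - e2 - Complex.exp ((((a+b)/2 : ℝ) : ℂ) * I) * QCZP_two_cos (((a-b)/2 : ℝ) : ℂ)

lemma QCZP_exp_sub_exp (a b : ℝ) :
    Complex.exp (a*I) - Complex.exp (b*I)
      = Complex.exp ((((a+b)/2 : ℝ) : ℂ) * I) * (2 * I * ((Real.sin ((a-b)/2) : ℝ) : ℂ)) := by
  have e1 : Complex.exp ((((a+b)/2 : ℝ) : ℂ) * I) * Complex.exp ((((a-b)/2 : ℝ) : ℂ) * I)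
      = Complex.exp ((a:ℂ)*I) := by rw [← Complex.exp_add]; congr 1; push_cast; ring
  have e2 : Complex.exp ((((a+b)/2 : ℝ) : ℂ) * I) * Complex.exp (-((((a-b)/2 : ℝ)) : ℂ) * I)
      = Complex.exp ((b:ℂ)*I) := by rw [← Complex.exp_add]; congr 1; push_cast; ring
  rw [Complex.ofReal_sin]
  linear_combination (-e1) + e2 - Complex.exp ((((a+b)/2 : ℝ) : ℂ) * I) * QCZP_two_I_sin (((a-b)/2 : ℝ) : ℂ)

lemma QCZP_prod_neg_iff (M : Multiset ℝ) (h : ∀ x ∈ M, x < 0) :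
    (M.prod < 0 ↔ Odd (Multiset.card M)) := by
  induction M using Multiset.induction_on with
  | empty => simp
  | cons a s ih =>
    have ha : a < 0 := h a (Multiset.mem_cons_self a s)
    have hs := ih (fun x hx => h x (Multiset.mem_cons_of_mem hx))
    have hne : s.prod ≠ 0 := Multiset.prod_ne_zero (fun h0 => absurd (h 0 (Multiset.mem_cons_of_mem h0)) (lt_irrefl 0))
    rw [Multiset.prod_cons, Multiset.card_cons]
    rw [Nat.odd_add_one, ← hs]
    constructor
    · intro h1 h2
      nlinarith
    · intro h1
      rcases lt_or_gt_of_ne hne with h2 | h2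
      · exact absurd h2 h1
      · nlinarith

end QCZPhelp



set_option maxHeartbeats 1600000 in
open scoped Classical in
/-- Parity of the number of zeros (with multiplicity) of the quasi-Carathéodory function
`f(z) = Σ_{j=0}^{n} c_j (z_j + z)/(z_j − z)` (with `z_j = e^{iθ_j}` in cyclic order, `c_j`
real, nonzero, summing to `1`) on the open arc between consecutive poles `z_j, z_{j+1}`:
the count is odd iff `c_j` and `c_{j+1}` have the same sign.  The zeros of `f` with
multiplicity on the arc are the roots there of the numerator polynomial
`N = Σ_j c_j (z_j + X) ∏_{k≠j} (z_k − X)`. -/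
theorem quasi_caratheodory_zero_parity
    (n : ℕ) (θ : ℕ → ℝ) (c : ℕ → ℝ)
    (hθmono : ∀ j k : ℕ, j < k → k ≤ n + 1 → θ j < θ k)
    (hθwrap : θ (n + 1) = θ 0 + 2 * Real.pi)
    (hcwrap : c (n + 1) = c 0)
    (hcne : ∀ j ≤ n, c j ≠ 0)
    (hsum : ∑ j ∈ Finset.range (n + 1), c j = 1) :
    ∀ j ≤ n,
      (Odd (Multiset.card
        ((∑ i ∈ Finset.range (n + 1),
            C ((c i : ℂ)) * (C (Complex.exp (θ i * Complex.I)) + X)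
              * ∏ k ∈ (Finset.range (n + 1)).erase i,
                  (C (Complex.exp (θ k * Complex.I)) - X)).roots.filter
          (fun u => ∃ t : ℝ, θ j < t ∧ t < θ (j + 1) ∧ u = Complex.exp (t * Complex.I))))
        ↔ 0 < c j * c (j + 1)) := by
  intro j hj
  have hπ := Real.pi_pos
  have hθle : ∀ k l : ℕ, k ≤ l → l ≤ n + 1 → θ k ≤ θ l := by
    intro k l hkl hl
    rcases eq_or_lt_of_le hkl with rfl | h
    · exact le_refl _
    · exact (hθmono k l h hl).le
  have hθwin : ∀ k l : ℕ, k ≤ n → l ≤ n → θ l - θ k < 2 * Real.pi := by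
    intro k l hk hl
    have h1 : θ l < θ (n+1) := hθmono l (n+1) (by omega) (le_refl _)
    have h2 : θ 0 ≤ θ k := hθle 0 k (by omega) (by omega)
    rw [hθwrap] at h1; linarith
  have hzinj : ∀ k l : ℕ, k ≤ n → l ≤ n →
      Complex.exp (θ k * Complex.I) = Complex.exp (θ l * Complex.I) → k = l := by
    suffices H : ∀ k l : ℕ, k ≤ n → l ≤ n → k < l →
        Complex.exp (θ k * Complex.I) ≠ Complex.exp (θ l * Complex.I) by
      intro k l hk hl he
      rcases lt_trichotomy k l with h|h|h
      · exact absurd he (H k l hk hl h)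
      · exact h
      · exact absurd he.symm (H l k hl hk h)
    intro k l hk hl hkl he
    have h1 : Complex.exp (((θ l - θ k : ℝ) : ℂ) * Complex.I) = 1 := by
      have hmul : Complex.exp ((θ k : ℝ) * Complex.I) * Complex.exp (((θ l - θ k : ℝ) : ℂ) * Complex.I)
          = Complex.exp ((θ k : ℝ) * Complex.I) * 1 := by
        rw [← Complex.exp_add, mul_one, he]
        congr 1; push_cast; ring
      exact mul_left_cancel₀ (Complex.exp_ne_zero _) hmul
    rw [Complex.exp_eq_one_iff] at h1
    obtain ⟨m, hm⟩ := h1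
    have h2 : ((θ l - θ k : ℝ) : ℂ) = (m : ℂ) * (2 * (Real.pi : ℂ)) := by
      apply mul_right_cancel₀ Complex.I_ne_zero
      rw [hm]; ring
    have h3 : (θ l - θ k) = (m : ℝ) * (2 * Real.pi) := by exact_mod_cast h2
    have hpos : 0 < θ l - θ k := sub_pos.2 (hθmono k l hkl (by omega))
    have hlt : θ l - θ k < 2 * Real.pi := hθwin k l hk hl
    have hcases : (1:ℝ) ≤ (m:ℝ) ∨ (m:ℝ) ≤ 0 := by
      exact_mod_cast (by omega : (1:ℤ) ≤ m ∨ m ≤ 0)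
    rcases hcases with h|h <;> nlinarith
  set N : Polynomial ℂ := ∑ i ∈ Finset.range (n + 1),
      C ((c i : ℂ)) * (C (Complex.exp (θ i * Complex.I)) + X)
        * ∏ k ∈ (Finset.range (n + 1)).erase i,
            (C (Complex.exp (θ k * Complex.I)) - X) with hN
  -- evaluation at a node is nonzero
  have hNnode : ∀ p, p ≤ n → N.eval (Complex.exp (θ p * Complex.I)) ≠ 0 := by
    intro p hp
    have hmem : p ∈ Finset.range (n+1) := Finset.mem_range.2 (by omega)
    have heval : N.eval (Complex.exp (θ p * Complex.I)) =
        (c p : ℂ) * (Complex.exp (θ p * Complex.I) + Complex.exp (θ p * Complex.I))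
          * ∏ k ∈ (Finset.range (n+1)).erase p,
              (Complex.exp (θ k * Complex.I) - Complex.exp (θ p * Complex.I)) := by
      rw [hN, eval_finset_sum, Finset.sum_eq_single p]
      · simp [eval_prod]
      · intro i hi hip
        have hpmem : p ∈ (Finset.range (n+1)).erase i :=
          Finset.mem_erase.2 ⟨fun h => hip h.symm, hmem⟩
        simp only [eval_mul, eval_prod]
        rw [Finset.prod_eq_zero hpmem (by simp)]
        ring
      · intro h; exact absurd hmem h
    rw [heval]
    apply mul_ne_zero (mul_ne_zero ?_ ?_) ?_
    · exact_mod_cast hcne p hp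
    · rw [← two_mul]; exact mul_ne_zero two_ne_zero (Complex.exp_ne_zero _)
    · rw [Finset.prod_ne_zero_iff]
      intro k hk
      have hk' := Finset.mem_erase.1 hk
      have hkn : k ≤ n := by have := Finset.mem_range.1 hk'.2; omega
      intro h0
      exact hk'.1 (hzinj k p hkn hp (by rwa [sub_eq_zero] at h0))
  set G : ℝ → ℝ := fun t => ∑ k ∈ Finset.range (n+1),
      c k * Real.cos ((θ k - t)/2) * ∏ l ∈ (Finset.range (n+1)).erase k, Real.sin ((θ l - t)/2)
    with hG
  set S0 : ℝ := ∑ l ∈ Finset.range (n+1), θ l with hS0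
  set W : ℝ → ℂ := fun t => Complex.exp ((((S0 + (n+1)*t)/2 : ℝ) : ℂ) * Complex.I) with hW
  have hA : ∀ t : ℝ, N.eval (Complex.exp ((t:ℝ) * Complex.I))
      = W t * (2^(n+1) * Complex.I^n) * ((G t : ℝ) : ℂ) := by
    intro t
    rw [hN, eval_finset_sum]
    have hterm : ∀ k ∈ Finset.range (n+1),
        eval (Complex.exp ((t:ℝ) * Complex.I))
            (C ((c k : ℂ)) * (C (Complex.exp (θ k * Complex.I)) + X)
              * ∏ l ∈ (Finset.range (n+1)).erase k, (C (Complex.exp (θ l * Complex.I)) - X))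
        = W t * (2^(n+1) * Complex.I^n)
            * ((c k * Real.cos ((θ k - t)/2)
                * ∏ l ∈ (Finset.range (n+1)).erase k, Real.sin ((θ l - t)/2) : ℝ) : ℂ) := by
      intro k hk
      simp only [eval_mul, eval_add, eval_sub, eval_C, eval_X, eval_prod]
      rw [QCZP_exp_add_exp (θ k) t]
      have hfac : ∀ l ∈ (Finset.range (n+1)).erase k,
          Complex.exp (θ l * Complex.I) - Complex.exp ((t:ℝ) * Complex.I)
          = Complex.exp ((((θ l + t)/2 : ℝ):ℂ) * Complex.I) * (2*Complex.I)
              * ((Real.sin ((θ l - t)/2) : ℝ):ℂ) := by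
        intro l _
        rw [QCZP_exp_sub_exp (θ l) t]; ring
      rw [Finset.prod_congr rfl hfac, Finset.prod_mul_distrib, Finset.prod_mul_distrib,
        Finset.prod_const]
      have hcard : ((Finset.range (n+1)).erase k).card = n := by
        rw [Finset.card_erase_of_mem hk, Finset.card_range]
        omega
      have hexp : ∏ l ∈ (Finset.range (n+1)).erase k,
            Complex.exp ((((θ l + t)/2 : ℝ):ℂ) * Complex.I)
          = Complex.exp ((((∑ l ∈ (Finset.range (n+1)).erase k, (θ l + t))/2 : ℝ) : ℂ)
              * Complex.I) := by
        rw [← Complex.exp_sum]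
        congr 1
        rw [← Finset.sum_mul]
        congr 1
        push_cast
        rw [Finset.sum_div]
      have hsum2 : ((θ k + t)/2) + (∑ l ∈ (Finset.range (n+1)).erase k, (θ l + t))/2
          = (S0 + (n+1)*t)/2 := by
        have hsplit := Finset.add_sum_erase (Finset.range (n+1)) (fun l => θ l + t) hk
        have htot : ∑ l ∈ Finset.range (n+1), (θ l + t) = S0 + (n+1)*t := by
          rw [hS0, Finset.sum_add_distrib, Finset.sum_const, Finset.card_range]
          push_cast; ring
        linarith
      have hWsplit : Complex.exp ((((θ k + t)/2 : ℝ):ℂ) * Complex.I)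
            * Complex.exp ((((∑ l ∈ (Finset.range (n+1)).erase k, (θ l + t))/2 : ℝ) : ℂ)
              * Complex.I) = W t := by
        rw [hW, ← Complex.exp_add, ← add_mul, ← Complex.ofReal_add, hsum2]
      rw [hexp, hcard]
      calc ((c k : ℂ)) * (Complex.exp ((((θ k + t)/2 : ℝ):ℂ) * Complex.I)
              * (2 * ((Real.cos ((θ k - t)/2) : ℝ) : ℂ)))
            * (Complex.exp ((((∑ l ∈ (Finset.range (n+1)).erase k, (θ l + t))/2 : ℝ) : ℂ)
                * Complex.I) * (2*Complex.I)^n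
              * ∏ l ∈ (Finset.range (n+1)).erase k, ((Real.sin ((θ l - t)/2) : ℝ) : ℂ))
          = (Complex.exp ((((θ k + t)/2 : ℝ):ℂ) * Complex.I)
              * Complex.exp ((((∑ l ∈ (Finset.range (n+1)).erase k, (θ l + t))/2 : ℝ) : ℂ)
                * Complex.I)) * (2^(n+1) * Complex.I^n)
              * ((c k : ℂ) * ((Real.cos ((θ k - t)/2) : ℝ) : ℂ)
                * ∏ l ∈ (Finset.range (n+1)).erase k, ((Real.sin ((θ l - t)/2) : ℝ) : ℂ)) := by
            rw [mul_pow]; ring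
        _ = W t * (2^(n+1) * Complex.I^n)
              * ((c k : ℂ) * ((Real.cos ((θ k - t)/2) : ℝ) : ℂ)
                * ∏ l ∈ (Finset.range (n+1)).erase k, ((Real.sin ((θ l - t)/2) : ℝ) : ℂ)) := by
            rw [hWsplit]
        _ = W t * (2^(n+1) * Complex.I^n)
              * ((c k * Real.cos ((θ k - t)/2)
                * ∏ l ∈ (Finset.range (n+1)).erase k, Real.sin ((θ l - t)/2) : ℝ) : ℂ) := by
            push_cast; ring
    rw [Finset.sum_congr rfl hterm, ← Finset.mul_sum]
    congr 1
    rw [hG]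
    push_cast
    rfl
  -- arc endpoints
  set a := θ j with ha
  set b := θ (j + 1) with hbdef
  have hab : a < b := hθmono j (j+1) (by omega) (by omega)
  have hble : b ≤ a + 2 * Real.pi := by
    have h1 : θ (j+1) ≤ θ (n+1) := hθle (j+1) (n+1) (by omega) (le_refl _)
    have h2 : θ 0 ≤ θ j := hθle 0 j (by omega) (by omega)
    rw [hθwrap] at h1
    rw [ha, hbdef]; linarith
  have hN0 : N ≠ 0 := by
    intro h0
    apply hNnode j hj
    rw [h0, eval_zero]
  set pred : ℂ → Prop := fun u => ∃ t : ℝ, a < t ∧ t < b ∧ u = Complex.exp ((t:ℝ) * Complex.I)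
    with hpred
  have hNsplits : N = C N.leadingCoeff * (N.roots.map fun r => X - C r).prod :=
    (IsAlgClosed.splits N).eq_prod_roots
  set S : Multiset ℂ := N.roots.filter pred with hSdef
  set T : Multiset ℂ := N.roots.filter (fun u => ¬ pred u) with hTdef
  have hST : S + T = N.roots := Multiset.filter_add_not pred N.roots
  set m : ℕ := Multiset.card S with hm
  have hSpec : ∀ r ∈ S, pred r := fun r hr => (Multiset.mem_filter.1 hr).2
  set s : ℂ → ℝ := fun r => if h : pred r then h.choose else 0 with hs
  have hsspec : ∀ r, pred r → a < s r ∧ s r < b ∧ r = Complex.exp ((s r : ℝ) * Complex.I) := by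
    intro r hr
    have hsr : s r = hr.choose := by rw [hs]; exact dif_pos hr
    rw [hsr]
    exact ⟨hr.choose_spec.1, hr.choose_spec.2.1, hr.choose_spec.2.2⟩
  set σs : Multiset ℝ := S.map s with hσ
  have hσmem : ∀ x ∈ σs, a < x ∧ x < b := by
    intro x hx
    obtain ⟨r, hr, rfl⟩ := Multiset.mem_map.1 hx
    exact ⟨(hsspec r (hSpec r hr)).1, (hsspec r (hSpec r hr)).2.1⟩
  have hσcard : Multiset.card σs = m := by rw [hσ, Multiset.card_map]
  set sσ : ℝ := σs.sum with hsσ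
  set QT : Polynomial ℂ := C N.leadingCoeff * (T.map fun r => X - C r).prod with hQT
  have hB : ∀ t : ℝ, N.eval (Complex.exp ((t:ℝ)*Complex.I))
      = (S.map fun r => Complex.exp ((t:ℝ)*Complex.I) - r).prod
          * QT.eval (Complex.exp ((t:ℝ)*Complex.I)) := by
    intro t
    conv_lhs => rw [hNsplits]
    rw [← hST, Multiset.map_add, Multiset.prod_add]
    simp only [eval_mul, eval_C, eval_multiset_prod, Multiset.map_map, Function.comp,
      eval_sub, eval_X]
    rw [hQT]
    simp only [eval_mul, eval_C, eval_multiset_prod, Multiset.map_map, Function.comp,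
      eval_sub, eval_X]
    ring
  set PS : ℝ → ℝ := fun t => (σs.map fun x => Real.sin ((t - x)/2)).prod with hPS
  have hSprod : ∀ t : ℝ, (S.map fun r => Complex.exp ((t:ℝ)*Complex.I) - r).prod
      = (2*Complex.I)^m * Complex.exp ((((m*t + sσ)/2 : ℝ):ℂ) * Complex.I)
          * ((PS t : ℝ):ℂ) := by
    intro t
    have hcong : ∀ r ∈ S, Complex.exp ((t:ℝ)*Complex.I) - r
        = ((2*Complex.I) * Complex.exp ((((t + s r)/2 : ℝ):ℂ) * Complex.I))
            * ((Real.sin ((t - s r)/2) : ℝ):ℂ) := by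
      intro r hr
      obtain ⟨h1, h2, h3⟩ := hsspec r (hSpec r hr)
      conv_lhs => rw [h3]
      rw [QCZP_exp_sub_exp t (s r)]
      ring
    rw [Multiset.map_congr rfl hcong, Multiset.prod_map_mul, Multiset.prod_map_mul]
    have h1 : (S.map fun _ => (2*Complex.I)).prod = (2*Complex.I)^m := by
      rw [Multiset.map_const', Multiset.prod_replicate, hm]
    have h2 : (S.map fun r => Complex.exp ((((t + s r)/2 : ℝ):ℂ) * Complex.I)).prod
        = Complex.exp ((((m*t + sσ)/2 : ℝ):ℂ) * Complex.I) := by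
      have hh : (S.map fun r => Complex.exp ((((t + s r)/2 : ℝ):ℂ) * Complex.I))
          = ((S.map fun r => (((t + s r)/2 : ℝ):ℂ) * Complex.I).map Complex.exp) := by
        rw [Multiset.map_map]; rfl
      rw [hh, ← Complex.exp_multiset_sum]
      congr 1
      have e1 : (S.map fun r => (((t + s r)/2 : ℝ):ℂ) * Complex.I)
          = S.map fun r => ((t + s r : ℝ):ℂ) * (Complex.I/2) := by
        apply Multiset.map_congr rfl
        intro r _
        push_cast; ring
      have e2 : (S.map fun r => ((t + s r : ℝ):ℂ) * (Complex.I/2))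
          = (S.map fun r => ((t + s r : ℝ):ℂ)).map (fun x => x * (Complex.I/2)) := by
        rw [Multiset.map_map]; rfl
      have e3 : (S.map fun r => ((t + s r : ℝ):ℂ))
          = (S.map fun r => (t + s r)).map (fun x : ℝ => (x:ℂ)) := by
        rw [Multiset.map_map]; rfl
      rw [e1, e2, Multiset.sum_map_mul_right, e3]
      have e4 : ((S.map fun r => (t + s r)).map (fun x : ℝ => (x:ℂ))).sum
          = (((S.map fun r => (t + s r)).sum : ℝ) : ℂ) := by
        simpa using (map_multiset_sum Complex.ofRealHom ((S.map fun r => (t + s r)))).symm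
      simp only [Multiset.map_id']
      rw [e4]
      have e5 : (S.map fun r => (t + s r)).sum = m * t + sσ := by
        rw [Multiset.sum_map_add, Multiset.map_const', Multiset.sum_replicate, hsσ, hσ, hm,
          nsmul_eq_mul]
      rw [e5]
      push_cast; ring
    have h3 : (S.map fun r => ((Real.sin ((t - s r)/2) : ℝ):ℂ)).prod = ((PS t : ℝ):ℂ) := by
      have e6 : (S.map fun r => ((Real.sin ((t - s r)/2) : ℝ):ℂ))
          = (S.map fun r => Real.sin ((t - s r)/2)).map (fun x : ℝ => (x:ℂ)) := by
        rw [Multiset.map_map]; rfl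
      have e7 : ((S.map fun r => Real.sin ((t - s r)/2)).map (fun x : ℝ => (x:ℂ))).prod
          = (((S.map fun r => Real.sin ((t - s r)/2)).prod : ℝ) : ℂ) := by
        simpa using (map_multiset_prod Complex.ofRealHom ((S.map fun r => Real.sin ((t - s r)/2)))).symm
      rw [e6, e7]
      norm_cast
      simp only [hPS, hσ, Multiset.map_map]
      rfl
    rw [h1, h2, h3]
  set Psi : ℝ → ℂ := fun t => (2*Complex.I)^m
      * Complex.exp (((((m*t + sσ)/2 - (S0 + (n+1)*t)/2) : ℝ) : ℂ) * Complex.I)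
      * QT.eval (Complex.exp ((t:ℝ)*Complex.I)) / (2^(n+1) * Complex.I^n) with hPsi
  have hcst : ((2:ℂ)^(n+1) * Complex.I^n) ≠ 0 :=
    mul_ne_zero (pow_ne_zero _ two_ne_zero) (pow_ne_zero _ Complex.I_ne_zero)
  have hGPsi : ∀ t : ℝ, ((G t : ℝ) : ℂ) = Psi t * ((PS t : ℝ):ℂ) := by
    intro t
    have h1 := hA t
    rw [hB t, hSprod t] at h1
    have hWne : W t ≠ 0 := Complex.exp_ne_zero _
    have hPsival : Psi t * (2^(n+1) * Complex.I^n)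
        = (2*Complex.I)^m
            * Complex.exp (((((m*t + sσ)/2 - (S0 + (n+1)*t)/2) : ℝ) : ℂ) * Complex.I)
            * QT.eval (Complex.exp ((t:ℝ)*Complex.I)) := by
      simp only [hPsi]
      exact div_mul_cancel₀ _ hcst
    have hexp2 : Complex.exp (((((m*t + sσ)/2 - (S0 + (n+1)*t)/2) : ℝ) : ℂ) * Complex.I) * W t
        = Complex.exp ((((m*t + sσ)/2 : ℝ):ℂ) * Complex.I) := by
      simp only [hW, ← Complex.exp_add]
      congr 1
      push_cast; ring
    apply mul_left_cancel₀ (mul_ne_zero hcst hWne)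
    linear_combination -h1 - (W t * ((PS t : ℝ):ℂ)) * hPsival
      - (((PS t : ℝ):ℂ) * (2*Complex.I)^m
          * QT.eval (Complex.exp ((t:ℝ)*Complex.I))) * hexp2
  have hPsicont : Continuous Psi := by
    simp only [hPsi]
    apply Continuous.div_const
    apply Continuous.mul
    apply Continuous.mul continuous_const
    · exact Complex.continuous_exp.comp
        ((Complex.continuous_ofReal.comp (by fun_prop)).mul continuous_const)
    · exact QT.continuous.comp
        (Complex.continuous_exp.comp (Complex.continuous_ofReal.mul continuous_const))
  have hNb' : N.eval (Complex.exp ((b:ℝ)*Complex.I)) ≠ 0 := by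
    rcases Nat.lt_or_ge j n with h | h
    · exact hNnode (j+1) (by omega)
    · have hjn : j = n := le_antisymm hj h
      have hbeq : Complex.exp ((b:ℝ)*Complex.I) = Complex.exp ((θ 0 : ℝ)*Complex.I) := by
        rw [hbdef, hjn, hθwrap]
        push_cast
        rw [add_mul, Complex.exp_add]
        have h2pi : Complex.exp ((2:ℂ) * (Real.pi:ℂ) * Complex.I) = 1 :=
          Complex.exp_two_pi_mul_I
        rw [h2pi, mul_one]
      rw [hbeq]
      exact hNnode 0 (by omega)
  have hTne : ∀ t ∈ Set.Icc a b, ∀ r ∈ T, Complex.exp ((t:ℝ)*Complex.I) ≠ r := by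
    intro t ht r hr heq
    have hroot : r ∈ N.roots := Multiset.mem_of_mem_filter hr
    have hnp : ¬ pred r := (Multiset.mem_filter.1 hr).2
    have hNr : N.eval r = 0 := isRoot_of_mem_roots hroot
    rcases eq_or_lt_of_le ht.1 with h1 | h1
    · apply hNnode j hj
      rw [← ha, h1, heq]
      exact hNr
    · rcases eq_or_lt_of_le ht.2 with h2 | h2
      · apply hNb'
        rw [← h2, heq]
        exact hNr
      · exact hnp ⟨t, h1, h2, heq.symm⟩
  have hPsine : ∀ t ∈ Set.Icc a b, Psi t ≠ 0 := by
    intro t ht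
    simp only [hPsi]
    apply div_ne_zero _ hcst
    apply mul_ne_zero (mul_ne_zero (pow_ne_zero _
      (mul_ne_zero two_ne_zero Complex.I_ne_zero)) (Complex.exp_ne_zero _))
    simp only [hQT, eval_mul, eval_C, eval_multiset_prod, Multiset.map_map, Function.comp,
      eval_sub, eval_X]
    apply mul_ne_zero
    · exact leadingCoeff_ne_zero.2 hN0
    · apply Multiset.prod_ne_zero
      intro h0
      obtain ⟨r, hr, hr0⟩ := Multiset.mem_map.1 h0
      exact hTne t ht r hr (by rw [← sub_eq_zero]; exact hr0)
  have hPScnt : Set.Countable {t : ℝ | PS t = 0} := by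
    have hsub : {t : ℝ | PS t = 0} ⊆
        ⋃ x ∈ (σs.toFinset : Set ℝ), Set.range (fun k : ℤ => x + k * (2*Real.pi)) := by
      intro t ht
      simp only [Set.mem_setOf_eq, hPS] at ht
      rw [Multiset.prod_eq_zero_iff] at ht
      obtain ⟨x, hx, hx0⟩ := Multiset.mem_map.1 ht
      obtain ⟨k, hk⟩ := Real.sin_eq_zero_iff.1 hx0
      refine Set.mem_biUnion (by simpa using Multiset.mem_toFinset.2 hx) ⟨k, ?_⟩
      simp only
      linarith
    exact Set.Countable.mono hsub
      (Set.Countable.biUnion (σs.toFinset.countable_toSet) (fun x _ => Set.countable_range _))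
  have hdense : Dense {t : ℝ | PS t = 0}ᶜ := hPScnt.dense_compl ℝ
  have hIm0 : ∀ t, (Psi t).im = 0 := by
    have hcont1 : Continuous fun t => (Psi t).im := Complex.continuous_im.comp hPsicont
    have heq : Set.EqOn (fun t => (Psi t).im) (fun _ => 0) {t : ℝ | PS t = 0}ᶜ := by
      intro t ht
      simp only [Set.mem_compl_iff, Set.mem_setOf_eq] at ht
      have him := congrArg Complex.im (hGPsi t)
      simp only [Complex.ofReal_im, Complex.mul_im, Complex.ofReal_re, mul_zero, zero_add,
        add_zero] at him
      have : (Psi t).im * PS t = 0 := by linarith [him]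
      have := mul_eq_zero.1 this
      simp only
      tauto
    have hfin := Continuous.ext_on hdense hcont1 continuous_const heq
    intro t
    exact congrFun hfin t
  have hpsine : ∀ t ∈ Set.Icc a b, (Psi t).re ≠ 0 := by
    intro t ht h0
    apply hPsine t ht
    rw [Complex.ext_iff]
    exact ⟨by simpa using h0, by simpa using hIm0 t⟩
  have hsignPsi : 0 < (Psi a).re * (Psi b).re := by
    by_contra hle
    push_neg at hle
    have h0mem : (0:ℝ) ∈ Set.uIcc ((Psi a).re) ((Psi b).re) := by
      rcases mul_nonpos_iff.1 hle with ⟨h1,h2⟩|⟨h1,h2⟩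
      · exact Set.mem_uIcc.2 (Or.inr ⟨h2, h1⟩)
      · exact Set.mem_uIcc.2 (Or.inl ⟨h1, h2⟩)
    have hcont : ContinuousOn (fun t => (Psi t).re) (Set.uIcc a b) :=
      (Complex.continuous_re.comp hPsicont).continuousOn
    obtain ⟨t0, ht0, h0⟩ := intermediate_value_uIcc hcont h0mem
    rw [Set.uIcc_of_le hab.le] at ht0
    exact hpsine t0 ht0 h0
  have hGreal : ∀ t, G t = (Psi t).re * PS t := by
    intro t
    have hre := congrArg Complex.re (hGPsi t)
    simpa [Complex.mul_re, hIm0 t] using hre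
  have hparity : PS a * PS b < 0 ↔ Odd m := by
    have hprodeq : PS a * PS b
        = (σs.map fun x => Real.sin ((a - x)/2) * Real.sin ((b - x)/2)).prod := by
      simp only [hPS]
      rw [Multiset.prod_map_mul]
    rw [hprodeq, ← hσcard,
      ← Multiset.card_map (fun x => Real.sin ((a - x)/2) * Real.sin ((b - x)/2)) σs]
    apply QCZP_prod_neg_iff
    intro y hy
    obtain ⟨x, hx, rfl⟩ := Multiset.mem_map.1 hy
    obtain ⟨h1, h2⟩ := hσmem x hx
    have hs1 : Real.sin ((a - x)/2) < 0 :=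
      Real.sin_neg_of_neg_of_neg_pi_lt (by linarith) (by linarith)
    have hs2 : 0 < Real.sin ((b - x)/2) :=
      Real.sin_pos_of_pos_of_lt_pi (by linarith) (by linarith)
    nlinarith
  have hGnode : ∀ p, p ≤ n → ∀ t0 : ℝ, Real.sin ((θ p - t0)/2) = 0 →
      G t0 = c p * Real.cos ((θ p - t0)/2)
        * ∏ l ∈ (Finset.range (n+1)).erase p, Real.sin ((θ l - t0)/2) := by
    intro p hp t0 h0
    simp only [hG]
    rw [Finset.sum_eq_single p]
    · intro k hk hkp
      have hpmem : p ∈ (Finset.range (n+1)).erase k :=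
        Finset.mem_erase.2 ⟨fun h => hkp h.symm, Finset.mem_range.2 (by omega)⟩
      rw [Finset.prod_eq_zero hpmem h0]
      ring
    · intro habs
      exact absurd (Finset.mem_range.2 (by omega)) habs
  have hsin_a : Real.sin ((θ j - a)/2) = 0 := by rw [← ha]; simp
  have hcos_a : Real.cos ((θ j - a)/2) = 1 := by rw [← ha]; simp
  have hGa := hGnode j hj a hsin_a
  rw [hcos_a, mul_one] at hGa
  have hiff : (G a * G b < 0) ↔ 0 < c j * c (j + 1) := by
    rcases Nat.lt_or_ge j n with hjltn | hge
    · -- j < n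
      have hj1 : j + 1 ≤ n := hjltn
      have hsin_b : Real.sin ((θ (j+1) - b)/2) = 0 := by rw [← hbdef]; simp
      have hcos_b : Real.cos ((θ (j+1) - b)/2) = 1 := by rw [← hbdef]; simp
      have hGb := hGnode (j+1) hj1 b hsin_b
      rw [hcos_b, mul_one] at hGb
      set E : Finset ℕ := (Finset.range (n+1)).filter (fun l => l ≠ j ∧ l ≠ j+1) with hE
      have hjE : j ∉ E := by simp [hE]
      have hj1E : j+1 ∉ E := by simp [hE]
      have hEa : (Finset.range (n+1)).erase j = insert (j+1) E := by
        ext x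
        simp only [Finset.mem_erase, Finset.mem_insert, hE, Finset.mem_filter,
          Finset.mem_range]
        omega
      have hEb : (Finset.range (n+1)).erase (j+1) = insert j E := by
        ext x
        simp only [Finset.mem_erase, Finset.mem_insert, hE, Finset.mem_filter,
          Finset.mem_range]
        omega
      have hPa : ∏ l ∈ (Finset.range (n+1)).erase j, Real.sin ((θ l - a)/2)
          = Real.sin ((θ (j+1) - a)/2) * ∏ l ∈ E, Real.sin ((θ l - a)/2) := by
        rw [hEa, Finset.prod_insert hj1E]
      have hPb : ∏ l ∈ (Finset.range (n+1)).erase (j+1), Real.sin ((θ l - b)/2)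
          = Real.sin ((θ j - b)/2) * ∏ l ∈ E, Real.sin ((θ l - b)/2) := by
        rw [hEb, Finset.prod_insert hjE]
      have hbounds : ∀ l ∈ E, 0 < Real.sin ((θ l - a)/2) * Real.sin ((θ l - b)/2) := by
        intro l hl
        simp only [hE, Finset.mem_filter, Finset.mem_range] at hl
        obtain ⟨hlr, hlj, hlj1⟩ := hl
        have hln : l ≤ n := by omega
        rcases Nat.lt_or_ge l j with hlt | hge2
        · have h1 : θ l < θ j := hθmono l j hlt (by omega)
          have h2 : θ l < θ (j+1) := hθmono l (j+1) (by omega) (by omega)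
          have h3 : θ j - θ l < 2*Real.pi := hθwin l j hln hj
          have h4 : θ (j+1) - θ l < 2*Real.pi := hθwin l (j+1) hln hj1
          have s1 : Real.sin ((θ l - a)/2) < 0 :=
            Real.sin_neg_of_neg_of_neg_pi_lt (by linarith) (by linarith)
          have s2 : Real.sin ((θ l - b)/2) < 0 :=
            Real.sin_neg_of_neg_of_neg_pi_lt (by linarith) (by linarith)
          nlinarith
        · have hgt : j+1 < l := by omega
          have h1 : θ j < θ l := hθmono j l (by omega) (by omega)
          have h2 : θ (j+1) < θ l := hθmono (j+1) l (by omega) (by omega)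
          have h3 : θ l - θ j < 2*Real.pi := hθwin j l hj hln
          have h4 : θ l - θ (j+1) < 2*Real.pi := hθwin (j+1) l hj1 hln
          have s1 : 0 < Real.sin ((θ l - a)/2) :=
            Real.sin_pos_of_pos_of_lt_pi (by linarith) (by linarith)
          have s2 : 0 < Real.sin ((θ l - b)/2) :=
            Real.sin_pos_of_pos_of_lt_pi (by linarith) (by linarith)
          nlinarith
      have hEpos : 0 < ∏ l ∈ E, (Real.sin ((θ l - a)/2) * Real.sin ((θ l - b)/2)) :=
        Finset.prod_pos hbounds
      have hw1 : θ (j+1) - θ j < 2*Real.pi := hθwin j (j+1) hj hj1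
      have hsj1 : 0 < Real.sin ((θ (j+1) - a)/2) :=
        Real.sin_pos_of_pos_of_lt_pi (by linarith [hθmono j (j+1) (by omega) (by omega : j+1 ≤ n+1)]) (by linarith)
      have hsj : Real.sin ((θ j - b)/2) < 0 :=
        Real.sin_neg_of_neg_of_neg_pi_lt (by linarith [hθmono j (j+1) (by omega) (by omega : j+1 ≤ n+1)]) (by linarith)
      have hprodE : (∏ l ∈ E, Real.sin ((θ l - a)/2)) * (∏ l ∈ E, Real.sin ((θ l - b)/2))
          = ∏ l ∈ E, (Real.sin ((θ l - a)/2) * Real.sin ((θ l - b)/2)) :=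
        (Finset.prod_mul_distrib).symm
      have hGaGb : G a * G b = (c j * c (j+1))
          * ((Real.sin ((θ (j+1) - a)/2) * Real.sin ((θ j - b)/2))
            * ∏ l ∈ E, (Real.sin ((θ l - a)/2) * Real.sin ((θ l - b)/2))) := by
        rw [hGa, hGb, hPa, hPb, ← hprodE]
        ring
      have hK : (Real.sin ((θ (j+1) - a)/2) * Real.sin ((θ j - b)/2))
          * ∏ l ∈ E, (Real.sin ((θ l - a)/2) * Real.sin ((θ l - b)/2)) < 0 :=
        mul_neg_of_neg_of_pos (mul_neg_of_pos_of_neg hsj1 hsj) hEpos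
      constructor
      · intro h
        rw [hGaGb] at h
        rcases mul_neg_iff.mp h with ⟨h1, h2⟩ | ⟨h1, h2⟩
        · exact h1
        · linarith
      · intro h
        rw [hGaGb]
        exact mul_neg_of_pos_of_neg h hK
    · -- j = n
      have hjn : j = n := le_antisymm hj hge
      subst hjn
      have hb2 : b = θ 0 + 2*Real.pi := by rw [hbdef, hθwrap]
      have harg : (θ 0 - b)/2 = -Real.pi := by rw [hb2]; ring
      have hsin_b0 : Real.sin ((θ 0 - b)/2) = 0 := by
        rw [harg, Real.sin_neg, Real.sin_pi, neg_zero]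
      have hcos_b0 : Real.cos ((θ 0 - b)/2) = -1 := by
        rw [harg, Real.cos_neg, Real.cos_pi]
      have hGb := hGnode 0 (by omega) b hsin_b0
      rw [hcos_b0] at hGb
      have herase_n : (Finset.range (j+1)).erase j = Finset.range j := by
        ext x
        simp only [Finset.mem_erase, Finset.mem_range]
        omega
      have herase_0 : (Finset.range (j+1)).erase 0 = (Finset.range j).image Nat.succ := by
        ext x
        simp only [Finset.mem_erase, Finset.mem_range, Finset.mem_image]
        constructor
        · rintro ⟨hx0, hxr⟩
          exact ⟨x - 1, by omega, by omega⟩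
        · rintro ⟨y, hy, rfl⟩
          omega
      have himg : ∏ l ∈ (Finset.range (j+1)).erase 0, Real.sin ((θ l - b)/2)
          = ∏ l ∈ Finset.range j, Real.sin ((θ (l+1) - b)/2) := by
        rw [herase_0, Finset.prod_image (fun x _ y _ h => Nat.succ_injective h)]
      rw [herase_n] at hGa
      rw [himg] at hGb
      have hbounds : ∀ l ∈ Finset.range j,
          0 < Real.sin ((θ l - a)/2) * Real.sin ((θ (l+1) - b)/2) := by
        intro l hl
        rw [Finset.mem_range] at hl
        have h1 : θ l < θ j := hθmono l j hl (by omega)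
        have h3 : θ j - θ l < 2*Real.pi := hθwin l j (by omega) hj
        have h4 : θ 0 < θ (l+1) := hθmono 0 (l+1) (by omega) (by omega)
        have h5 : θ (l+1) < θ (j+1) := hθmono (l+1) (j+1) (by omega) (by omega)
        rw [hθwrap] at h5
        have s1 : Real.sin ((θ l - a)/2) < 0 :=
          Real.sin_neg_of_neg_of_neg_pi_lt (by linarith) (by linarith)
        have s2 : Real.sin ((θ (l+1) - b)/2) < 0 :=
          Real.sin_neg_of_neg_of_neg_pi_lt (by linarith) (by linarith)
        nlinarith
      have hEpos : 0 < ∏ l ∈ Finset.range j,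
          (Real.sin ((θ l - a)/2) * Real.sin ((θ (l+1) - b)/2)) :=
        Finset.prod_pos hbounds
      have hprodE : (∏ l ∈ Finset.range j, Real.sin ((θ l - a)/2))
            * (∏ l ∈ Finset.range j, Real.sin ((θ (l+1) - b)/2))
          = ∏ l ∈ Finset.range j, (Real.sin ((θ l - a)/2) * Real.sin ((θ (l+1) - b)/2)) :=
        (Finset.prod_mul_distrib).symm
      have hGaGb : G a * G b = -(c j * c (j+1))
          * ∏ l ∈ Finset.range j, (Real.sin ((θ l - a)/2) * Real.sin ((θ (l+1) - b)/2)) := by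
        rw [hGa, hGb, ← hprodE, hcwrap]
        ring
      constructor
      · intro h
        nlinarith
      · intro h
        nlinarith
  have hGab2 : G a * G b = ((Psi a).re * (Psi b).re) * (PS a * PS b) := by
    rw [hGreal a, hGreal b]; ring
  constructor
  · intro hOddm
    have hPSneg : PS a * PS b < 0 := hparity.2 hOddm
    exact hiff.1 (by nlinarith)
  · intro hcc
    apply hparity.1
    have hGaGbneg : G a * G b < 0 := hiff.2 hcc
    nlinarith
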